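/- For any elements x, y, z of a Cayley-Dickson loop Q_n, the associator [x,y,z] defined by (xy)z = (x(yz))·[x,y,z] equals 1 or -1. -/

import Mathlib

/-- The underlying set of the Cayley-Dickson loop `Q n`:
`Q 0 = {±1}` (encoded as `Bool`, `false = 1`, `true = -1`) and `Q (n+1) = Q n × Bool`,
an element `(x, b)` encoding `(x, 0)` if `b = false` and `(x, 1)` if `b = true`. -/
def Q : ℕ → Type
  | 0 => Bool
  | n+1 => Q n × Bool

namespace Q

def one : ∀ n, Q n
  | 0 => false
  | n+1 => (one n, false)

def neg : ∀ n, Q n → Q n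
  | 0, x => !x
  | n+1, (x, b) => (neg n x, b)

def conj : ∀ n, Q n → Q n
  | 0, x => x
  | n+1, (x, false) => (conj n x, false)
  | n+1, (x, true) => (neg n x, true)

/-- Cayley-Dickson doubling multiplication restricted to the loop:
`(x,0)(y,0) = (xy,0)`, `(x,0)(y,1) = (yx,1)`, `(x,1)(y,0) = (xy*,1)`, `(x,1)(y,1) = (-y*x,0)`. -/
def mul : ∀ n, Q n → Q n → Q n
  | 0, x, y => xor x y
  | n+1, (x, false), (y, false) => (mul n x y, false)
  | n+1, (x, false), (y, true)  => (mul n y x, true)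
  | n+1, (x, true),  (y, false) => (mul n x (conj n y), true)
  | n+1, (x, true),  (y, true)  => (neg n (mul n (conj n y) x), false)

instance (n : ℕ) : One (Q n) := ⟨one n⟩
instance (n : ℕ) : Neg (Q n) := ⟨neg n⟩
instance (n : ℕ) : Mul (Q n) := ⟨mul n⟩
instance (n : ℕ) : Star (Q n) := ⟨conj n⟩
/-- In `Q n` the inverse of `x` is its conjugate `x*`. -/
instance (n : ℕ) : Inv (Q n) := ⟨conj n⟩

instance instDecEq : ∀ n, DecidableEq (Q n)
  | 0 => inferInstanceAs (DecidableEq Bool)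
  | n+1 => letI := instDecEq n; inferInstanceAs (DecidableEq (Q n × Bool))

instance instFintype : ∀ n, Fintype (Q n)
  | 0 => inferInstanceAs (Fintype Bool)
  | n+1 => letI := instFintype n; inferInstanceAs (Fintype (Q n × Bool))

/-- Powers in `Q n` (well defined by diassociativity). -/
def pow {n : ℕ} (x : Q n) : ℕ → Q n
  | 0 => 1
  | k+1 => x * pow x k

/-- The embedding `x ↦ (x, 0)` of `Q n` into `Q (n+1)`. -/
def up {n : ℕ} (x : Q n) : Q (n+1) := (x, false)

/-- The map `x ↦ (x, 1)` from `Q n` into `Q (n+1)`. -/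
def up1 {n : ℕ} (x : Q n) : Q (n+1) := (x, true)

/-- The commutator `[x,y]`, defined by `xy = (yx)[x,y]`. -/
def comm {n : ℕ} (x y : Q n) : Q n := (y * x)⁻¹ * (x * y)

/-- The associator `[x,y,z]`, defined by `(xy)z = (x(yz))[x,y,z]`. -/
def assoc {n : ℕ} (x y z : Q n) : Q n := (x * (y * z))⁻¹ * ((x * y) * z)

/-- A subloop of the Cayley-Dickson loop `Q n`: a subset containing `1` and closed
under multiplication and inverses (= conjugates). -/
structure Subloop (n : ℕ) where
  carrier : Set (Q n)
  one_mem : (1 : Q n) ∈ carrier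
  mul_mem : ∀ ⦃x y : Q n⦄, x ∈ carrier → y ∈ carrier → x * y ∈ carrier
  inv_mem : ∀ ⦃x : Q n⦄, x ∈ carrier → x⁻¹ ∈ carrier

/-- The subloop of `Q n` generated by a set `s`. -/
def closure (n : ℕ) (s : Set (Q n)) : Set (Q n) :=
  ⋂₀ {t : Set (Q n) | s ⊆ t ∧ (1 : Q n) ∈ t ∧
      (∀ x ∈ t, ∀ y ∈ t, x * y ∈ t) ∧ (∀ x ∈ t, x⁻¹ ∈ t)}

end Q

namespace Q

theorem neg_neg' : ∀ n (x : Q n), neg n (neg n x) = x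
  | 0, x => by simp [neg]; exact Bool.not_not x
  | n+1, (x, b) => by simp [neg, neg_neg' n x]; rfl

theorem conj_neg' : ∀ n (x : Q n), conj n (neg n x) = neg n (conj n x)
  | 0, x => rfl
  | n+1, (x, false) => by simp [neg, conj, conj_neg' n x]; rfl
  | n+1, (x, true) => by simp [neg, conj]; rfl

theorem conj_one' : ∀ n, conj n (one n) = one n
  | 0 => rfl
  | n+1 => by simp [one, conj, conj_one' n]; rfl

theorem mul_neg' : ∀ n (x y : Q n),
    mul n x (neg n y) = neg n (mul n x y) ∧ mul n (neg n x) y = neg n (mul n x y)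
  | 0, x, y => by constructor <;> simp [mul, neg, Bool.xor_not]; exacts [Bool.xor_not x y, Bool.not_xor x y]
  | n+1, (x, a), (y, b) => by
    match a, b with
    | false, false => simp [mul, neg, mul_neg' n]; rfl
    | false, true => simp [mul, neg, mul_neg' n]; rfl
    | true, false => simp [mul, neg, conj_neg', mul_neg' n]; rfl
    | true, true => simp [mul, neg, conj_neg', mul_neg' n, neg_neg']; rfl

theorem mul_one' : ∀ n (x : Q n), mul n x (one n) = x
  | 0, x => by simp [mul, one]; exact Bool.xor_false x
  | n+1, (x, a) => by
    match a with
    | false => simp [mul, one, mul_one' n x]; rfl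
    | true => simp [mul, one, conj_one', mul_one' n x]; rfl

theorem conj_mul_self' : ∀ n (x : Q n), mul n (conj n x) x = one n
  | 0, x => by simp [mul, conj, one]; exact Bool.xor_self x
  | n+1, (x, a) => by
    match a with
    | false => simp [mul, conj, one, conj_mul_self' n x]; rfl
    | true => simp [mul, conj, one, neg, (mul_neg' n _ _).1, neg_neg', conj_mul_self' n x]; rfl

end Q
namespace Q

/-- equality up to sign -/
def pm {n : ℕ} (a b : Q n) : Prop := a = b ∨ a = neg n b

theorem pm.refl {n : ℕ} (a : Q n) : pm a a := Or.inl rfl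

theorem pm.symm {n : ℕ} {a b : Q n} (h : pm a b) : pm b a := by
  rcases h with h | h
  · exact Or.inl h.symm
  · exact Or.inr (by rw [h, neg_neg'])

theorem pm.trans {n : ℕ} {a b c : Q n} (h : pm a b) (h' : pm b c) : pm a c := by
  rcases h with h | h <;> rcases h' with h' | h' <;> subst h <;> subst h' <;>
    simp [pm, neg_neg']

instance {n : ℕ} : Trans (pm (n := n)) (pm (n := n)) (pm (n := n)) := ⟨pm.trans⟩

theorem pm.mul_left {n : ℕ} (a : Q n) {b c : Q n} (h : pm b c) :
    pm (mul n a b) (mul n a c) := by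
  rcases h with h | h
  · exact Or.inl (by rw [h])
  · exact Or.inr (by rw [h, (mul_neg' n _ _).1])

theorem pm.mul_right {n : ℕ} (a : Q n) {b c : Q n} (h : pm b c) :
    pm (mul n b a) (mul n c a) := by
  rcases h with h | h
  · exact Or.inl (by rw [h])
  · exact Or.inr (by rw [h, (mul_neg' n _ _).2])

theorem pm.neg_right {n : ℕ} {a b : Q n} (h : pm a b) : pm a (neg n b) := by
  rcases h with h | h
  · exact Or.inr (by rw [h, neg_neg'])
  · exact Or.inl h

theorem pm.neg_left {n : ℕ} {a b : Q n} (h : pm a b) : pm (neg n a) b :=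
  (h.symm.neg_right).symm

theorem pm.pair {n : ℕ} {A B : Q n} (b : Bool) (h : pm A B) :
    pm (n := n+1) (A, b) (B, b) := by
  rcases h with h | h
  · exact Or.inl (by rw [h])
  · exact Or.inr (by rw [h]; rfl)

theorem conj_pm : ∀ n (x : Q n), pm (conj n x) x
  | 0, x => Or.inl rfl
  | n+1, (x, a) => by
    match a with
    | false => exact pm.pair false (conj_pm n x)
    | true => exact Or.inr rfl

theorem comm_pm : ∀ n (x y : Q n), pm (mul n x y) (mul n y x)
  | 0, x, y => Or.inl (by simp [mul, Bool.xor_comm]; exact Bool.xor_comm x y)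
  | n+1, (x, a), (y, b) => by
    match a, b with
    | false, false => exact pm.pair false (comm_pm n x y)
    | false, true => exact pm.pair true ((pm.mul_left y (conj_pm n x)).symm)
    | true, false => exact pm.pair true (pm.mul_left x (conj_pm n y))
    | true, true =>
      refine pm.pair false (pm.neg_left (pm.neg_right ?_))
      exact ((pm.mul_right x (conj_pm n y)).trans (comm_pm n x y).symm).trans
        (pm.mul_right y (conj_pm n x)).symm

theorem assoc_pm : ∀ n (x y z : Q n),
    pm (mul n (mul n x y) z) (mul n x (mul n y z))
  | 0, x, y, z => Or.inl (by simp [mul, Bool.xor_assoc]; exact Bool.xor_assoc x y z)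
  | n+1, (x, a), (y, b), (z, c) => by
    match a, b, c with
    | false, false, false =>
      exact pm.pair false (assoc_pm n x y z)
    | false, false, true =>
      -- goal components: z(xy) vs (zy)x
      exact pm.pair true
        ((pm.mul_left z (comm_pm n x y)).trans (assoc_pm n z y x).symm)
    | false, true, false =>
      -- (yx)z* vs (y z*)x
      exact pm.pair true
        (((assoc_pm n y x (conj n z)).trans
          (pm.mul_left y (comm_pm n x (conj n z)))).trans
          (assoc_pm n y (conj n z) x).symm)
    | false, true, true =>
      -- neg (z*(yx)) vs x · neg(z*y)
      rw [show mul (n+1) ((x,false) : Q n × Bool) (mul (n+1) (y,true) (z,true))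
            = (mul n x (neg n (mul n (conj n z) y)), false) from rfl,
          (mul_neg' n _ _).1]
      exact pm.pair false
        (((assoc_pm n (conj n z) y x).symm.trans
          (comm_pm n (mul n (conj n z) y) x)).neg_left.neg_right)
    | true, false, false =>
      -- (x y*) z* vs x (yz)*
      refine pm.pair true ?_
      refine ((pm.mul_right (conj n z) (pm.mul_left x (conj_pm n y))).trans ?_).trans
        (pm.mul_left x (conj_pm n (mul n y z)).symm)
      exact ((pm.mul_left (mul n x y) (conj_pm n z)).trans (assoc_pm n x y z))
    | true, false, true =>
      -- neg (z* (x y*)) vs neg ((zy)* x)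
      refine pm.pair false ?_
      refine pm.neg_left (pm.neg_right ?_)
      have L : pm (mul n (conj n z) (mul n x (conj n y))) (mul n z (mul n x y)) :=
        (pm.mul_right _ (conj_pm n z)).trans (pm.mul_left z (pm.mul_left x (conj_pm n y)))
      have R : pm (mul n (conj n (mul n z y)) x) (mul n z (mul n x y)) :=
        ((pm.mul_right x (conj_pm n (mul n z y))).trans (assoc_pm n z y x)).trans
          (pm.mul_left z (comm_pm n y x))
      exact L.trans R.symm
    | true, true, false =>
      -- (neg(y*x)) z vs neg ((y z*)* x)
      rw [show mul (n+1) (mul (n+1) ((x,true) : Q n × Bool) (y,true)) (z,false)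
            = (mul n (neg n (mul n (conj n y) x)) z, false) from rfl,
          (mul_neg' n _ _).2]
      refine pm.pair false (pm.neg_left (pm.neg_right ?_))
      have L : pm (mul n (mul n (conj n y) x) z) (mul n (mul n y z) x) :=
        (((pm.mul_right z (pm.mul_right x (conj_pm n y))).trans
          (assoc_pm n y x z)).trans (pm.mul_left y (comm_pm n x z))).trans
          (assoc_pm n y z x).symm
      have R : pm (mul n (conj n (mul n y (conj n z))) x) (mul n (mul n y z) x) :=
        pm.mul_right x ((conj_pm n _).trans (pm.mul_left y (conj_pm n z)))
      exact L.trans R.symm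
    | true, true, true =>
      -- neg? LHS: ((x,1)(y,1))(z,1) = (neg(y*x),0)(z,1) = (z · neg(y*x), 1)
      -- RHS: (x,1)(neg(z*y),0) = (x · conj(neg(z*y)), 1)
      rw [show mul (n+1) (mul (n+1) ((x,true) : Q n × Bool) (y,true)) (z,true)
            = (mul n z (neg n (mul n (conj n y) x)), true) from rfl,
          show mul (n+1) ((x,true) : Q n × Bool) (mul (n+1) (y,true) (z,true))
            = (mul n x (conj n (neg n (mul n (conj n z) y))), true) from rfl,
          conj_neg', (mul_neg' n _ _).1, (mul_neg' n _ _).1]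
      refine pm.pair true (pm.neg_left (pm.neg_right ?_))
      have L : pm (mul n z (mul n (conj n y) x)) (mul n x (mul n z y)) :=
        ((pm.mul_left z (pm.mul_right x (conj_pm n y))).trans
          (assoc_pm n z y x).symm).trans (comm_pm n (mul n z y) x)
      have R : pm (mul n x (conj n (mul n (conj n z) y))) (mul n x (mul n z y)) :=
        pm.mul_left x ((conj_pm n _).trans (pm.mul_right y (conj_pm n z)))
      exact L.trans R.symm

end Q

/-- For any elements `x, y, z` of a Cayley-Dickson loop `Q n`, the associator `[x,y,z]`,
defined by `(xy)z = (x(yz))·[x,y,z]`, equals `1` or `-1`. -/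
theorem Q.assoc_eq_one_or_neg_one (n : ℕ) (x y z : Q n) :
    (x * y) * z = (x * (y * z)) * Q.assoc x y z ∧
    (Q.assoc x y z = 1 ∨ Q.assoc x y z = -1) := by
  rcases Q.assoc_pm n x y z with h | h
  · constructor
    · show Q.mul n (Q.mul n x y) z = Q.mul n (Q.mul n x (Q.mul n y z))
        (Q.mul n (Q.conj n (Q.mul n x (Q.mul n y z))) (Q.mul n (Q.mul n x y) z))
      rw [h, Q.conj_mul_self', Q.mul_one']
    · left
      show Q.mul n (Q.conj n (Q.mul n x (Q.mul n y z))) (Q.mul n (Q.mul n x y) z) = Q.one n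
      rw [h, Q.conj_mul_self']
  · constructor
    · show Q.mul n (Q.mul n x y) z = Q.mul n (Q.mul n x (Q.mul n y z))
        (Q.mul n (Q.conj n (Q.mul n x (Q.mul n y z))) (Q.mul n (Q.mul n x y) z))
      rw [h, (Q.mul_neg' n _ _).1, Q.conj_mul_self', (Q.mul_neg' n _ _).1, Q.mul_one']
    · right
      show Q.mul n (Q.conj n (Q.mul n x (Q.mul n y z))) (Q.mul n (Q.mul n x y) z)
        = Q.neg n (Q.one n)
      rw [h, (Q.mul_neg' n _ _).1, Q.conj_mul_self']
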